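/- For every integer k ≥ 2, let n_k be the smallest positive multiple of k that is strictly greater than log(k) / (log(1 + 1/k) − log(2)/k). Then for every n ≥ n_k there exists a compact set A ⊆ ℝⁿ such that Vol_n(A(k+1)) < Vol_n(A(k)). In particular n_2 = 12, so for every n ≥ 12 there exists a compact set A ⊆ ℝⁿ with Vol_n(A(3)) < Vol_n(A(2)). -/

import Mathlib

open MeasureTheory Finset
open scoped Pointwise ENNReal

/-- The Minkowski average `A(k) = (A + ⋯ + A)/k` (`k` Minkowski summands) of a set
`A ⊆ ℝⁿ`: the set of all averages `(a 1 + ⋯ + a k)/k` with each `a i ∈ A`. -/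
def minkAvg {n : ℕ} (A : Set (EuclideanSpace ℝ (Fin n))) (k : ℕ) :
    Set (EuclideanSpace ℝ (Fin n)) :=
  {x | ∃ a : Fin k → EuclideanSpace ℝ (Fin n), (∀ i, a i ∈ A) ∧ x = (k : ℝ)⁻¹ • ∑ i, a i}

/-- The threshold `log(k) / (log(1 + 1/k) − log(2)/k)` of Theorem 3.3 of
Fradelizi–Madiman–Marsiglietti–Zvavitch. -/
noncomputable def FMMZthreshold (k : ℕ) : ℝ :=
  Real.log k / (Real.log (1 + 1 / (k : ℝ)) - Real.log 2 / (k : ℝ))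

namespace FMMZaux

/-- A coordinate box `∏ⱼ [0, rⱼ]` inside `EuclideanSpace ℝ (Fin n)`. -/
def ebox {n : ℕ} (r : Fin n → ℝ) : Set (EuclideanSpace ℝ (Fin n)) :=
  {x | ∀ j, x j ∈ Set.Icc 0 (r j)}

lemma volume_ebox {n : ℕ} (r : Fin n → ℝ) :
    volume (ebox r) = ∏ j, ENNReal.ofReal (r j) := by
  have h : ebox r =
      (MeasurableEquiv.toLp 2 (Fin n → ℝ)).symm ⁻¹' (Set.univ.pi fun j => Set.Icc 0 (r j)) := by
    ext x
    simp only [ebox, Set.mem_setOf_eq, Set.mem_preimage, Set.mem_univ_pi,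
      MeasurableEquiv.toLp_symm_apply, MeasurableEquiv.coe_mk, Equiv.coe_fn_mk]
  rw [h, (EuclideanSpace.volume_preserving_symm_measurableEquiv_toLp (Fin n)).measure_preimage
    (MeasurableSet.univ_pi fun j => measurableSet_Icc).nullMeasurableSet,
    volume_pi_pi]
  simp [Real.volume_Icc]

lemma isCompact_ebox {n : ℕ} (r : Fin n → ℝ) : IsCompact (ebox r) := by
  have h : ebox r =
      (EuclideanSpace.equiv (Fin n) ℝ).toHomeomorph ⁻¹' (Set.univ.pi fun j => Set.Icc 0 (r j)) := by
    ext x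
    simp only [ebox, Set.mem_setOf_eq, Set.mem_preimage, Set.mem_univ_pi]
    rfl
  rw [h, ← Homeomorph.image_symm]
  exact (isCompact_univ_pi fun j => isCompact_Icc).image (Homeomorph.continuous _)

lemma esum_apply {n : ℕ} {ι : Type*} (s : Finset ι) (f : ι → EuclideanSpace ℝ (Fin n))
    (j : Fin n) : (∑ i ∈ s, f i) j = ∑ i ∈ s, f i j := by
  induction s using Finset.cons_induction with
  | empty => rfl
  | cons a s ha ih => rw [Finset.sum_cons, Finset.sum_cons, PiLp.add_apply, ih]

/-- Product over a range of `k*m` grouped into `k` blocks of length `m`. -/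
lemma prod_range_mul_div {M : Type*} [CommMonoid M] (f : ℕ → M) (k m : ℕ) (hm : 0 < m) :
    ∏ j ∈ Finset.range (k * m), f (j / m) = ∏ b ∈ Finset.range k, (f b) ^ m := by
  induction k with
  | zero => simp
  | succ k ih =>
    rw [Nat.succ_mul, Finset.prod_range_add, ih, Finset.prod_range_succ]
    congr 1
    have : ∀ i ∈ Finset.range m, f ((k * m + i) / m) = f k := by
      intro i hi
      have hi' : i < m := Finset.mem_range.mp hi
      have : (k * m + i) / m = k := by
        rw [mul_comm, Nat.mul_add_div hm, Nat.div_eq_of_lt hi', add_zero]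
      rw [this]
    rw [Finset.prod_congr rfl this, Finset.prod_const, Finset.card_range]

/-- The combinatorial pigeonhole step: a `k`-tuple of positive naturals summing
to `k+1` is `1` everywhere except a single `2`. -/
lemma comb_lemma {k : ℕ} (hk : 2 ≤ k) (d : Fin k → ℕ) (hsum : ∑ b, d b = k + 1)
    (hpos : ∀ b, 1 ≤ d b) : ∃ b₀ : Fin k, d = fun b => if b = b₀ then 2 else 1 := by
  have hcard : (Finset.univ : Finset (Fin k)).card = k := by simp
  -- exists b₀ with d b₀ ≥ 2
  have hex : ∃ b₀ : Fin k, 2 ≤ d b₀ := by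
    by_contra hcon
    push_neg at hcon
    have : ∑ b, d b ≤ ∑ _b : Fin k, 1 := Finset.sum_le_sum fun b _ => by
      have := hcon b; omega
    simp [hcard] at this
    omega
  obtain ⟨b₀, hb₀⟩ := hex
  have hmem : b₀ ∈ (Finset.univ : Finset (Fin k)) := Finset.mem_univ _
  have hsplit : d b₀ + ∑ b ∈ Finset.univ.erase b₀, d b = k + 1 := by
    rw [Finset.add_sum_erase _ _ hmem]; exact hsum
  have hcard_erase : (Finset.univ.erase b₀).card = k - 1 := by
    rw [Finset.card_erase_of_mem hmem, hcard]
  have hge : k - 1 ≤ ∑ b ∈ Finset.univ.erase b₀, d b := by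
    have := Finset.card_nsmul_le_sum (Finset.univ.erase b₀) d 1 fun b _ => hpos b
    simpa [hcard_erase] using this
  have hd2 : d b₀ = 2 := by omega
  refine ⟨b₀, funext fun b => ?_⟩
  by_cases hbb : b = b₀
  · simp [hbb, hd2]
  · simp only [hbb, if_false]
    -- show d b = 1
    have hbmem : b ∈ Finset.univ.erase b₀ := Finset.mem_erase.mpr ⟨hbb, Finset.mem_univ _⟩
    have hsplit2 : d b + ∑ c ∈ (Finset.univ.erase b₀).erase b, d c
        = ∑ c ∈ Finset.univ.erase b₀, d c := Finset.add_sum_erase _ _ hbmem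
    have hcard2 : ((Finset.univ.erase b₀).erase b).card = k - 2 := by
      rw [Finset.card_erase_of_mem hbmem, hcard_erase]; omega
    have hge2 : k - 2 ≤ ∑ c ∈ (Finset.univ.erase b₀).erase b, d c := by
      have := Finset.card_nsmul_le_sum ((Finset.univ.erase b₀).erase b) d 1 fun c _ => hpos c
      simpa [hcard2] using this
    have := hpos b
    omega

lemma two_lt_pow {k : ℕ} (hk : 2 ≤ k) : 2 < (1 + 1 / (k : ℝ)) ^ k := by
  have hK : (2 : ℝ) ≤ (k : ℝ) := by exact_mod_cast hk
  have hK0 : (0 : ℝ) < k := by linarith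
  set x : ℝ := 1 / (k : ℝ) with hx
  have hx0 : 0 < x := by positivity
  have hxK : (k : ℝ) * x = 1 := by
    rw [hx]; field_simp
  have hb : 1 + ((k - 1 : ℕ) : ℝ) * x ≤ (1 + x) ^ (k - 1) :=
    one_add_mul_le_pow (by linarith) (k - 1)
  have hcast : ((k - 1 : ℕ) : ℝ) = (k : ℝ) - 1 := by
    have : 1 ≤ k := by omega
    push_cast [this]; ring
  rw [hcast] at hb
  have hpow : (1 + x) ^ k = (1 + x) ^ (k - 1) * (1 + x) := by
    rw [← pow_succ]
    congr 1
    omega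
  have h1x : 0 < 1 + x := by linarith
  have : (1 + ((k : ℝ) - 1) * x) * (1 + x) ≤ (1 + x) ^ (k - 1) * (1 + x) :=
    mul_le_mul_of_nonneg_right hb (le_of_lt h1x)
  rw [← hpow] at this
  nlinarith [sq_nonneg x, mul_pos hx0 hx0]

lemma denom_pos {k : ℕ} (hk : 2 ≤ k) :
    0 < Real.log (1 + 1 / (k : ℝ)) - Real.log 2 / (k : ℝ) := by
  have hK : (2 : ℝ) ≤ (k : ℝ) := by exact_mod_cast hk
  have hK0 : (0 : ℝ) < k := by linarith
  have h2 : Real.log 2 < (k : ℝ) * Real.log (1 + 1 / (k : ℝ)) := by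
    have := Real.log_lt_log (by norm_num) (two_lt_pow hk)
    rwa [Real.log_pow] at this
  rw [sub_pos, div_lt_iff₀ hK0]
  linarith [h2]

lemma key_of_threshold {k m : ℕ} (hk : 2 ≤ k) (hm : 1 ≤ m)
    (h : FMMZthreshold k < ((k * m : ℕ) : ℝ)) :
    (k : ℝ) ^ (k * m + 1) * 2 ^ m < ((k : ℝ) + 1) ^ (k * m) := by
  have hK : (2 : ℝ) ≤ (k : ℝ) := by exact_mod_cast hk
  have hK0 : (0 : ℝ) < k := by linarith
  have hD := denom_pos hk
  rw [FMMZthreshold, div_lt_iff₀ hD] at h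
  have hcast : ((k * m : ℕ) : ℝ) = (k : ℝ) * m := by push_cast; ring
  rw [hcast] at h
  -- h : log k < k*m * (log (1+1/k) - log 2 / k)
  have hm1 : (1 : ℝ) ≤ (m : ℝ) := by exact_mod_cast hm
  have hstep : Real.log ((k : ℝ) * 2 ^ m) < Real.log ((1 + 1 / (k : ℝ)) ^ (k * m)) := by
    rw [Real.log_mul (by linarith) (by positivity), Real.log_pow, Real.log_pow]
    have he : ((k : ℝ) * m) * (Real.log 2 / k) = (m : ℝ) * Real.log 2 := by field_simp
    push_cast
    nlinarith [h, he]
  have hlt : (k : ℝ) * 2 ^ m < (1 + 1 / (k : ℝ)) ^ (k * m) := by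
    have h1 : (0 : ℝ) < (k : ℝ) * 2 ^ m := by positivity
    exact (Real.log_lt_log_iff h1 (by positivity)).mp hstep
  have hmul : (k : ℝ) ^ (k * m) * (1 + 1 / (k : ℝ)) ^ (k * m) = ((k : ℝ) + 1) ^ (k * m) := by
    rw [← mul_pow]
    congr 1
    field_simp
  have hKpow : (0 : ℝ) < (k : ℝ) ^ (k * m) := by positivity
  calc (k : ℝ) ^ (k * m + 1) * 2 ^ m = (k : ℝ) ^ (k * m) * ((k : ℝ) * 2 ^ m) := by ring
  _ < (k : ℝ) ^ (k * m) * (1 + 1 / (k : ℝ)) ^ (k * m) := by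
      exact mul_lt_mul_of_pos_left hlt hKpow
  _ = ((k : ℝ) + 1) ^ (k * m) := hmul

lemma FMMZ2_eq : FMMZthreshold 2 = Real.log 2 / (Real.log (3/2) - Real.log 2 / 2) := by
  rw [FMMZthreshold]
  norm_num

lemma D2_pos : 0 < Real.log (3/2) - Real.log 2 / 2 := by
  have := denom_pos (k := 2) le_rfl
  have h : (1 : ℝ) + 1 / ((2:ℕ) : ℝ) = 3/2 := by norm_num
  rw [h] at this
  convert this using 3
  norm_num

lemma th2_lt : FMMZthreshold 2 < 12 := by
  rw [FMMZ2_eq, div_lt_iff₀ D2_pos]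
  have h1 : Real.log (2 ^ 7 : ℝ) < Real.log ((3/2 : ℝ) ^ 12) :=
    Real.log_lt_log (by norm_num) (by norm_num)
  rw [Real.log_pow, Real.log_pow] at h1
  push_cast at h1
  nlinarith [h1]

lemma th2_ge : (10 : ℝ) ≤ FMMZthreshold 2 := by
  rw [FMMZ2_eq, le_div_iff₀ D2_pos]
  have h1 : Real.log ((3/2 : ℝ) ^ 10) ≤ Real.log (2 ^ 6 : ℝ) :=
    Real.log_le_log (by positivity) (by norm_num)
  rw [Real.log_pow, Real.log_pow] at h1
  push_cast at h1
  nlinarith [h1]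

lemma lower_incl (n k m : ℕ) (hk : 2 ≤ k) (hm : 1 ≤ m) :
    ebox (fun j : Fin n => if (j : ℕ) < k * m then (k : ℝ)⁻¹ else 1) ⊆
      minkAvg (⋃ b : Fin k, ebox fun j : Fin n =>
        if (j : ℕ) < k * m then (if (j : ℕ) / m = (b : ℕ) then (1:ℝ) else 0) else 1) k := by
  have hK : (2:ℝ) ≤ (k:ℝ) := by exact_mod_cast hk
  have hK0 : (0:ℝ) < (k:ℝ) := by linarith
  intro x hx
  refine ⟨fun b => WithLp.toLp 2 (fun j => if (j:ℕ) < k*m then (if (j:ℕ)/m = (b:ℕ) then (k:ℝ) * x j else 0) else x j :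
    Fin n → ℝ), ?_, ?_⟩
  · intro b
    refine Set.mem_iUnion.mpr ⟨b, fun j => ?_⟩
    have hxj := hx j
    simp only [Set.mem_Icc] at hxj ⊢
    by_cases hj : (j:ℕ) < k * m
    · simp only [hj, if_true] at hxj ⊢
      by_cases hb : (j:ℕ)/m = (b:ℕ)
      · simp only [hb, if_true]
        constructor
        · nlinarith [hxj.1]
        · calc (k:ℝ) * x j ≤ (k:ℝ) * (k:ℝ)⁻¹ := by
                exact mul_le_mul_of_nonneg_left hxj.2 (le_of_lt hK0)
          _ = 1 := mul_inv_cancel₀ (ne_of_gt hK0)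
      · simp [hb]
    · simp only [hj, if_false] at hxj ⊢
      exact hxj
  · ext j
    rw [PiLp.smul_apply, esum_apply]
    by_cases hj : (j:ℕ) < k * m
    · simp only [hj, if_true]
      have hjm : (j:ℕ)/m < k := Nat.div_lt_iff_lt_mul (by omega) |>.mpr hj
      have hb0 : ∀ b : Fin k, ((j:ℕ)/m = (b:ℕ)) ↔ b = ⟨(j:ℕ)/m, hjm⟩ := by
        intro b
        rw [Fin.ext_iff]
        simp [eq_comm]
      have : ∀ b : Fin k, (if (j:ℕ)/m = (b:ℕ) then (k:ℝ) * x j else 0) =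
          (if b = ⟨(j:ℕ)/m, hjm⟩ then (k:ℝ) * x j else 0) := by
        intro b; exact if_congr (hb0 b) rfl rfl
      rw [Finset.sum_congr rfl fun b _ => this b, Finset.sum_ite_eq' Finset.univ _ _]
      simp only [Finset.mem_univ, if_true]
      rw [smul_eq_mul, inv_mul_cancel_left₀ (ne_of_gt hK0)]
    · simp only [hj, if_false]
      rw [Finset.sum_const, Finset.card_univ, Fintype.card_fin, smul_eq_mul, nsmul_eq_mul]
      field_simp

lemma upper_incl (n k m : ℕ) (hk : 2 ≤ k) (hm : 1 ≤ m) :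
    minkAvg (⋃ b : Fin k, ebox fun j : Fin n =>
        if (j : ℕ) < k * m then (if (j : ℕ) / m = (b : ℕ) then (1:ℝ) else 0) else 1) (k+1) ⊆
      ⋃ d ∈ Finset.image
          (fun g : Fin (k+1) → Fin k => fun b => (Finset.univ.filter fun i => g i = b).card)
          Finset.univ,
        ebox fun j : Fin n =>
          if (j : ℕ) < k * m
          then ((if h : (j:ℕ)/m < k then d ⟨(j:ℕ)/m, h⟩ else 0 : ℕ) : ℝ) / ((k:ℝ)+1)
          else 1 := by
  have hK : (2:ℝ) ≤ (k:ℝ) := by exact_mod_cast hk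
  have hK0 : (0:ℝ) < (k:ℝ) := by linarith
  have hK1 : (0:ℝ) < (k:ℝ) + 1 := by linarith
  rintro x ⟨a, ha, hxeq⟩
  choose g hg using fun i => Set.mem_iUnion.mp (ha i)
  refine Set.mem_biUnion (Finset.mem_image_of_mem _ (Finset.mem_univ g)) ?_
  intro j
  have hxj : x j = (((k:ℕ)+1 : ℝ))⁻¹ * ∑ i, a i j := by
    rw [hxeq, PiLp.smul_apply, esum_apply, smul_eq_mul]
    push_cast
    ring_nf
  have hnonneg : ∀ i, 0 ≤ a i j := by
    intro i
    have := hg i j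
    simp only [Set.mem_Icc] at this
    exact this.1
  simp only [Set.mem_Icc]
  by_cases hj : (j:ℕ) < k * m
  · have hjm : (j:ℕ)/m < k := Nat.div_lt_iff_lt_mul (by omega) |>.mpr hj
    simp only [hj, if_true, dif_pos hjm]
    have hub : ∀ i, a i j ≤ (if g i = ⟨(j:ℕ)/m, hjm⟩ then (1:ℝ) else 0) := by
      intro i
      have := hg i j
      simp only [Set.mem_Icc, hj, if_true] at this
      have hcond : ((j:ℕ)/m = ((g i):ℕ)) ↔ g i = ⟨(j:ℕ)/m, hjm⟩ := by
        rw [Fin.ext_iff]; simp [eq_comm]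
      calc a i j ≤ _ := this.2
      _ = _ := if_congr hcond rfl rfl
    have hsum : ∑ i, a i j ≤ ((Finset.univ.filter fun i => g i = ⟨(j:ℕ)/m, hjm⟩).card : ℝ) := by
      calc ∑ i, a i j ≤ ∑ i, (if g i = ⟨(j:ℕ)/m, hjm⟩ then (1:ℝ) else 0) :=
            Finset.sum_le_sum fun i _ => hub i
      _ = _ := by rw [Finset.sum_boole]
    constructor
    · rw [hxj]
      have : (0:ℝ) ≤ ∑ i, a i j := Finset.sum_nonneg fun i _ => hnonneg i
      positivity
    · rw [hxj, div_eq_inv_mul]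
      push_cast
      apply mul_le_mul_of_nonneg_left _ (by positivity)
      exact hsum
  · simp only [hj, if_false]
    have hub : ∀ i, a i j ≤ 1 := by
      intro i
      have := hg i j
      simp only [Set.mem_Icc, hj, if_false] at this
      exact this.2
    constructor
    · rw [hxj]
      have : (0:ℝ) ≤ ∑ i, a i j := Finset.sum_nonneg fun i _ => hnonneg i
      positivity
    · rw [hxj]
      have hsum : ∑ i, a i j ≤ ((k:ℝ)+1) := by
        calc ∑ i, a i j ≤ ∑ _i : Fin (k+1), (1:ℝ) := Finset.sum_le_sum fun i _ => hub i
        _ = ((k:ℝ)+1) := by simp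
      rw [inv_mul_le_iff₀ (by linarith)]
      linarith

-- generic: volume of a box whose weights only depend on (j : ℕ), block structure
lemma volume_ebox_blocks {n k m : ℕ} (hm : 0 < m) (hn : k * m ≤ n) (f : ℕ → ℝ) :
    volume (ebox fun j : Fin n => if (j : ℕ) < k * m then f ((j:ℕ)/m) else 1)
      = ∏ b ∈ Finset.range k, (ENNReal.ofReal (f b)) ^ m := by
  rw [volume_ebox]
  have h1 : ∏ j : Fin n, ENNReal.ofReal (if (j : ℕ) < k * m then f ((j:ℕ)/m) else 1)
      = ∏ i ∈ Finset.range n, ENNReal.ofReal (if i < k * m then f (i/m) else 1) :=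
    Fin.prod_univ_eq_prod_range (fun i => ENNReal.ofReal (if i < k * m then f (i/m) else 1)) n
  rw [h1, ← Finset.prod_range_mul_prod_Ico _ hn]
  have h2 : ∏ i ∈ Finset.Ico (k*m) n, ENNReal.ofReal (if i < k * m then f (i/m) else 1) = 1 := by
    apply Finset.prod_eq_one
    intro i hi
    have : ¬ i < k * m := by
      have := (Finset.mem_Ico.mp hi).1; omega
    simp [this]
  rw [h2, mul_one]
  have h3 : ∀ i ∈ Finset.range (k*m),
      ENNReal.ofReal (if i < k * m then f (i/m) else 1) = ENNReal.ofReal (f (i/m)) := by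
    intro i hi
    simp [Finset.mem_range.mp hi]
  rw [Finset.prod_congr rfl h3, prod_range_mul_div (fun t => ENNReal.ofReal (f t)) k m hm]

lemma sum_est {k m : ℕ} (hk : 2 ≤ k) (hm : 1 ≤ m) :
    ∑ d ∈ Finset.image
        (fun g : Fin (k+1) → Fin k => fun b => (Finset.univ.filter fun i => g i = b).card)
        Finset.univ,
      (∏ b : Fin k, (ENNReal.ofReal ((d b : ℝ)/((k:ℝ)+1))) ^ m)
    ≤ (k : ℝ≥0∞) * ((ENNReal.ofReal (2/((k:ℝ)+1))) ^ m
        * (ENNReal.ofReal (1/((k:ℝ)+1))) ^ ((k-1) * m)) := by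
  set S := Finset.image
      (fun g : Fin (k+1) → Fin k => fun b => (Finset.univ.filter fun i => g i = b).card)
      Finset.univ with hS
  set P : (Fin k → ℕ) → ℝ≥0∞ := fun d => ∏ b : Fin k, (ENNReal.ofReal ((d b : ℝ)/((k:ℝ)+1))) ^ m
    with hP
  have hSsum : ∀ d ∈ S, ∑ b, d b = k + 1 := by
    intro d hd
    obtain ⟨g, _, rfl⟩ := Finset.mem_image.mp hd
    have := Finset.card_eq_sum_card_fiberwise
      (f := g) (s := Finset.univ) (t := Finset.univ) (fun i _ => Finset.mem_univ _)
    simpa using this.symm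
  have hzero : ∀ d ∈ S.filter (fun d => ¬ ∀ b, 1 ≤ d b), P d = 0 := by
    intro d hd
    obtain ⟨-, hd2⟩ := Finset.mem_filter.mp hd
    push_neg at hd2
    obtain ⟨b, hb⟩ := hd2
    have hb0 : d b = 0 := by omega
    apply Finset.prod_eq_zero (Finset.mem_univ b)
    rw [hb0]
    norm_num
    omega
  have hsplit := Finset.sum_filter_add_sum_filter_not S (fun d => ∀ b, 1 ≤ d b) P
  rw [← hsplit, Finset.sum_eq_zero hzero, add_zero]
  set dd : Fin k → (Fin k → ℕ) := fun b₀ b => if b = b₀ then 2 else 1 with hdd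
  have hsub : S.filter (fun d => ∀ b, 1 ≤ d b) ⊆ Finset.image dd Finset.univ := by
    intro d hd
    obtain ⟨hd1, hd2⟩ := Finset.mem_filter.mp hd
    obtain ⟨b₀, hb₀⟩ := comb_lemma hk d (hSsum d hd1) hd2
    exact Finset.mem_image.mpr ⟨b₀, Finset.mem_univ _, hb₀.symm⟩
  calc ∑ d ∈ S.filter (fun d => ∀ b, 1 ≤ d b), P d
      ≤ ∑ d ∈ Finset.image dd Finset.univ, P d :=
        Finset.sum_le_sum_of_subset hsub
  _ = ∑ b₀ : Fin k, P (dd b₀) := by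
        rw [Finset.sum_image]
        intro b₀ _ b₁ _ h
        by_contra hne
        have h2 := congrFun h b₀
        simp only [hdd, if_pos rfl, if_neg hne] at h2
        omega
  _ ≤ (k : ℝ≥0∞) * ((ENNReal.ofReal (2/((k:ℝ)+1))) ^ m
        * (ENNReal.ofReal (1/((k:ℝ)+1))) ^ ((k-1) * m)) := by
        have hPdd : ∀ b₀ : Fin k, P (dd b₀) =
            (ENNReal.ofReal (2/((k:ℝ)+1))) ^ m
              * (ENNReal.ofReal (1/((k:ℝ)+1))) ^ ((k-1) * m) := by
          intro b₀
          have hfac : ∀ b : Fin k, (ENNReal.ofReal ((dd b₀ b : ℝ)/((k:ℝ)+1))) ^ m =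
              if b = b₀ then (ENNReal.ofReal (2/((k:ℝ)+1))) ^ m
              else (ENNReal.ofReal (1/((k:ℝ)+1))) ^ m := by
            intro b
            by_cases hb : b = b₀ <;> simp [hdd, hb]
          rw [hP]
          simp only []
          rw [Finset.prod_congr rfl fun b _ => hfac b,
            ← Finset.mul_prod_erase Finset.univ _ (Finset.mem_univ b₀), if_pos rfl]
          have : ∀ b ∈ Finset.univ.erase b₀,
              (if b = b₀ then (ENNReal.ofReal (2/((k:ℝ)+1))) ^ m
                else (ENNReal.ofReal (1/((k:ℝ)+1))) ^ m)
              = (ENNReal.ofReal (1/((k:ℝ)+1))) ^ m := by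
            intro b hb
            rw [if_neg (Finset.mem_erase.mp hb).1]
          rw [Finset.prod_congr rfl this, Finset.prod_const, Finset.card_erase_of_mem
            (Finset.mem_univ b₀), Finset.card_univ, Fintype.card_fin, ← pow_mul, mul_comm m]
        rw [Finset.sum_congr rfl fun b₀ _ => hPdd b₀, Finset.sum_const, Finset.card_univ,
          Fintype.card_fin, nsmul_eq_mul]

lemma final_lt {k m : ℕ} (hk : 2 ≤ k) (hm : 1 ≤ m)
    (hkey : (k : ℝ) ^ (k * m + 1) * 2 ^ m < ((k : ℝ) + 1) ^ (k * m)) :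
    (k : ℝ≥0∞) * ((ENNReal.ofReal (2/((k:ℝ)+1))) ^ m
        * (ENNReal.ofReal (1/((k:ℝ)+1))) ^ ((k-1) * m))
      < (ENNReal.ofReal ((k:ℝ)⁻¹)) ^ (k * m) := by
  have hK : (2:ℝ) ≤ (k:ℝ) := by exact_mod_cast hk
  have hK0 : (0:ℝ) < (k:ℝ) := by linarith
  have hK1 : (0:ℝ) < (k:ℝ) + 1 := by linarith
  rw [← ENNReal.ofReal_pow (by positivity), ← ENNReal.ofReal_pow (by positivity),
    ← ENNReal.ofReal_pow (by positivity), ← ENNReal.ofReal_mul (by positivity),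
    ← ENNReal.ofReal_natCast k, ← ENNReal.ofReal_mul (by positivity)]
  rw [ENNReal.ofReal_lt_ofReal_iff (by positivity)]
  -- real inequality
  have hkm : m + (k-1) * m = k * m := by
    have h1 : 1 ≤ k := by omega
    calc m + (k-1) * m = ((k-1) + 1) * m := by ring
    _ = k * m := by rw [Nat.sub_add_cancel h1]
  have hexp : (2/((k:ℝ)+1)) ^ m * (1/((k:ℝ)+1)) ^ ((k-1)*m)
      = 2 ^ m / ((k:ℝ)+1) ^ (k*m) := by
    rw [div_pow, div_pow, one_pow, div_mul_div_comm, ← pow_add, hkm, mul_one]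
  rw [hexp]
  rw [inv_pow, ← one_div, lt_div_iff₀ (by positivity)]
  have heq : (k:ℝ) * (2 ^ m / ((k:ℝ)+1) ^ (k*m)) * (k:ℝ) ^ (k*m)
      = ((k:ℝ) ^ (k*m+1) * 2 ^ m) / ((k:ℝ)+1) ^ (k*m) := by ring
  rw [heq, div_lt_one (by positivity)]
  exact hkey

lemma main_construction {n k m : ℕ} (hk : 2 ≤ k) (hm : 1 ≤ m) (hn : k * m ≤ n)
    (hkey : (k : ℝ) ^ (k * m + 1) * 2 ^ m < ((k : ℝ) + 1) ^ (k * m)) :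
    ∃ A : Set (EuclideanSpace ℝ (Fin n)), IsCompact A ∧
      volume (minkAvg A (k + 1)) < volume (minkAvg A k) := by
  refine ⟨⋃ b : Fin k, ebox fun j : Fin n =>
      if (j : ℕ) < k * m then (if (j : ℕ) / m = (b : ℕ) then (1:ℝ) else 0) else 1,
    isCompact_iUnion fun b => isCompact_ebox _, ?_⟩
  have hm0 : 0 < m := hm
  have hvol : ∀ d : Fin k → ℕ,
      volume (ebox fun j : Fin n =>
        if (j : ℕ) < k * m
        then ((if h : (j:ℕ)/m < k then d ⟨(j:ℕ)/m, h⟩ else 0 : ℕ) : ℝ) / ((k:ℝ)+1)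
        else 1)
      = ∏ b : Fin k, (ENNReal.ofReal ((d b : ℝ)/((k:ℝ)+1))) ^ m := by
    intro d
    rw [volume_ebox_blocks hm0 hn
      (fun t => ((if h : t < k then d ⟨t, h⟩ else 0 : ℕ) : ℝ) / ((k:ℝ)+1))]
    rw [← Fin.prod_univ_eq_prod_range
      (fun t => (ENNReal.ofReal (((if h : t < k then d ⟨t, h⟩ else 0 : ℕ) : ℝ) / ((k:ℝ)+1))) ^ m) k]
    apply Finset.prod_congr rfl
    intro b _
    rw [dif_pos b.isLt]
  have hupper : volume (minkAvg (⋃ b : Fin k, ebox fun j : Fin n =>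
        if (j : ℕ) < k * m then (if (j : ℕ) / m = (b : ℕ) then (1:ℝ) else 0) else 1) (k+1))
      ≤ (k : ℝ≥0∞) * ((ENNReal.ofReal (2/((k:ℝ)+1))) ^ m
          * (ENNReal.ofReal (1/((k:ℝ)+1))) ^ ((k-1) * m)) := by
    calc volume (minkAvg _ (k+1))
        ≤ volume (⋃ d ∈ Finset.image
            (fun g : Fin (k+1) → Fin k => fun b => (Finset.univ.filter fun i => g i = b).card)
            Finset.univ,
          ebox fun j : Fin n =>
            if (j : ℕ) < k * m
            then ((if h : (j:ℕ)/m < k then d ⟨(j:ℕ)/m, h⟩ else 0 : ℕ) : ℝ) / ((k:ℝ)+1)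
            else 1) := measure_mono (upper_incl n k m hk hm)
    _ ≤ ∑ d ∈ Finset.image
            (fun g : Fin (k+1) → Fin k => fun b => (Finset.univ.filter fun i => g i = b).card)
            Finset.univ,
          volume (ebox fun j : Fin n =>
            if (j : ℕ) < k * m
            then ((if h : (j:ℕ)/m < k then d ⟨(j:ℕ)/m, h⟩ else 0 : ℕ) : ℝ) / ((k:ℝ)+1)
            else 1) := measure_biUnion_finset_le _ _
    _ = ∑ d ∈ Finset.image
            (fun g : Fin (k+1) → Fin k => fun b => (Finset.univ.filter fun i => g i = b).card)
            Finset.univ,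
          (∏ b : Fin k, (ENNReal.ofReal ((d b : ℝ)/((k:ℝ)+1))) ^ m) :=
        Finset.sum_congr rfl fun d _ => hvol d
    _ ≤ _ := sum_est hk hm
  have hlowvol : volume (ebox fun j : Fin n => if (j : ℕ) < k * m then (k:ℝ)⁻¹ else 1)
      = (ENNReal.ofReal ((k:ℝ)⁻¹)) ^ (k * m) := by
    rw [volume_ebox_blocks hm0 hn (fun _ => (k:ℝ)⁻¹), Finset.prod_const, Finset.card_range,
      ← pow_mul, mul_comm m k]
  have hlower : (ENNReal.ofReal ((k:ℝ)⁻¹)) ^ (k * m)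
      ≤ volume (minkAvg (⋃ b : Fin k, ebox fun j : Fin n =>
          if (j : ℕ) < k * m then (if (j : ℕ) / m = (b : ℕ) then (1:ℝ) else 0) else 1) k) := by
    rw [← hlowvol]
    exact measure_mono (lower_incl n k m hk hm)
  exact lt_of_lt_of_le (lt_of_le_of_lt hupper (final_lt hk hm hkey)) hlower


end FMMZaux

theorem exists_compact_volume_minkAvg_decreasing :
    (∀ k : ℕ, 2 ≤ k → ∀ nk : ℕ,
      IsLeast {m : ℕ | 0 < m ∧ k ∣ m ∧ FMMZthreshold k < (m : ℝ)} nk →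
      ∀ n : ℕ, nk ≤ n →
        ∃ A : Set (EuclideanSpace ℝ (Fin n)), IsCompact A ∧
          volume (minkAvg A (k + 1)) < volume (minkAvg A k)) ∧
    IsLeast {m : ℕ | 0 < m ∧ 2 ∣ m ∧ FMMZthreshold 2 < (m : ℝ)} 12 ∧
    (∀ n : ℕ, 12 ≤ n →
      ∃ A : Set (EuclideanSpace ℝ (Fin n)), IsCompact A ∧
        volume (minkAvg A 3) < volume (minkAvg A 2)) := by
  have hmain : ∀ k : ℕ, 2 ≤ k → ∀ nk : ℕ,
      IsLeast {m : ℕ | 0 < m ∧ k ∣ m ∧ FMMZthreshold k < (m : ℝ)} nk →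
      ∀ n : ℕ, nk ≤ n →
        ∃ A : Set (EuclideanSpace ℝ (Fin n)), IsCompact A ∧
          volume (minkAvg A (k + 1)) < volume (minkAvg A k) := by
    intro k hk nk hleast n hn
    obtain ⟨⟨hpos, ⟨m, hmeq⟩, hth⟩, -⟩ := hleast
    subst hmeq
    have hm : 1 ≤ m := by
      rcases Nat.eq_zero_or_pos m with h | h
      · subst h; simp at hpos
      · exact h
    have hn' : k * m ≤ n := hn
    exact FMMZaux.main_construction hk hm hn' (FMMZaux.key_of_threshold hk hm hth)
  have hleast12 : IsLeast {m : ℕ | 0 < m ∧ 2 ∣ m ∧ FMMZthreshold 2 < (m : ℝ)} 12 := by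
    constructor
    · refine ⟨by norm_num, by norm_num, ?_⟩
      have h := FMMZaux.th2_lt
      have : ((12 : ℕ) : ℝ) = 12 := by norm_num
      rw [this]
      exact h
    · intro c hc
      obtain ⟨h1, h2, h3⟩ := hc
      have h4 : (10 : ℝ) < (c : ℝ) := lt_of_le_of_lt FMMZaux.th2_ge h3
      have h5 : 10 < c := by exact_mod_cast h4
      omega
  exact ⟨hmain, hleast12, fun n hn => hmain 2 le_rfl 12 hleast12 n hn⟩
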